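/- Let Γ be a group with finite abelianization Γ/[Γ,Γ] (e.g. a property (T) group), let Γ₁, …, Γₙ be copies of Γ, let Γ act on the free product A = Γ₁ ∗ ⋯ ∗ Γₙ by the free product ρ of the conjugation actions, and let G = A ⋊_ρ Γ. Then G has finite abelianization G/[G,G]; in particular the character group Hom(G, 𝕋) is finite. -/

import Mathlib

/-- Homs from a finite commutative group to `Circle` form a finite type. -/
lemma finite_monoidHom_circle (A : Type*) [CommGroup A] [Finite A] :
    Finite (A →* Circle) := by
  have : Finite Aˣ := Finite.of_injective (Units.val) (fun _ _ h => Units.ext h)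
  have : Finite (Aˣ →* ℂˣ) := Finite.of_equiv _ (MulChar.equivToUnitHom (R := A) (R' := ℂ))
  have hinj : Function.Injective (Circle.toUnits) := by
    intro a b h
    have := congrArg Units.val h
    exact Circle.ext (by simpa using this)
  refine Finite.of_injective
    (fun φ : A →* Circle => Circle.toUnits.comp (φ.comp (toUnits (G := A)).symm.toMonoidHom))
    ?_
  intro φ ψ h
  ext a
  have := congrArg (fun f : Aˣ →* ℂˣ => f (toUnits a)) h
  simp only [MonoidHom.comp_apply, MulEquiv.coe_toMonoidHom, MulEquiv.symm_apply_apply] at this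
  have h2 := hinj this
  exact congrArg _ h2

/-- Let `Γ` be a group with finite abelianization (e.g. a property (T) group), let
`A = Γ₁ ∗ ⋯ ∗ Γₙ` be the free product of `n` copies of `Γ`, and let `Γ` act on `A` by the
free product `ρ` of the conjugation actions (so `ρ_γ` sends the element `x` of the `i`-th
free factor to `γ x γ⁻¹`).  Then the semidirect product `G = A ⋊_ρ Γ` has finite
abelianization; in particular its character group `Hom(G, 𝕋)` is finite. -/
theorem stmt11 {Γ : Type*} [Group Γ] (n : ℕ)
    (hΓ : Finite (Abelianization Γ))
    (ρ : Γ →* MulAut (Monoid.CoprodI (fun _ : Fin n => Γ)))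
    (hρ : ∀ (γ : Γ) (i : Fin n) (x : Γ),
      ρ γ (Monoid.CoprodI.of (M := fun _ : Fin n => Γ) (i := i) x)
        = Monoid.CoprodI.of (M := fun _ : Fin n => Γ) (i := i) (γ * x * γ⁻¹)) :
    Finite (Abelianization (Monoid.CoprodI (fun _ : Fin n => Γ) ⋊[ρ] Γ)) ∧
    Finite ((Monoid.CoprodI (fun _ : Fin n => Γ) ⋊[ρ] Γ) →* Circle) := by
  set A := Monoid.CoprodI (fun _ : Fin n => Γ) with hA
  set G := A ⋊[ρ] Γ with hG
  -- the projection to the abelianization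
  let π : G →* Abelianization G := Abelianization.of
  -- for each factor, a hom from `Abelianization Γ`
  let e : Fin n → (Γ →* G) := fun i =>
    (SemidirectProduct.inl (φ := ρ)).comp (Monoid.CoprodI.of (M := fun _ : Fin n => Γ) (i := i))
  let g : Fin n → (Abelianization Γ →* Abelianization G) := fun i =>
    Abelianization.lift (π.comp (e i))
  let h : Abelianization Γ →* Abelianization G :=
    Abelianization.lift (π.comp (SemidirectProduct.inr (φ := ρ)))
  -- the combined map from a finite group
  let F : ((Fin n → Abelianization Γ) × Abelianization Γ) →* Abelianization G :=
    MonoidHom.mk' (fun p => (∏ i, g i (p.1 i)) * h p.2) (by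
      intro p q
      simp only [Pi.mul_apply, map_mul, Finset.prod_mul_distrib, Prod.fst_mul, Prod.snd_mul]
      exact mul_mul_mul_comm _ _ _ _)
  have hFsurj : Function.Surjective F := by
    intro x
    induction x using QuotientGroup.induction_on with | H y =>
    suffices hy : π y ∈ F.range by exact hy
    rw [← SemidirectProduct.inl_left_mul_inr_right y, map_mul]
    refine mul_mem ?_ ?_
    · -- the `A` part
      induction y.left using Monoid.CoprodI.induction_on with
      | one => simpa using one_mem F.range
      | of i x =>
        refine ⟨(Pi.mulSingle i (Abelianization.of x), 1), ?_⟩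
        show (∏ j, g j ((Pi.mulSingle i (Abelianization.of x) : Fin n → Abelianization Γ) j)) * h 1 = _
        rw [map_one, mul_one,
          Fintype.prod_eq_single i (fun j hj => by rw [Pi.mulSingle_eq_of_ne hj, map_one]),
          Pi.mulSingle_eq_same]
        rfl
      | mul a b ha hb => rw [map_mul, map_mul]; exact mul_mem ha hb
    · -- the `Γ` part
      exact ⟨(1, Abelianization.of y.right), by
        show (∏ j, g j ((1 : Fin n → Abelianization Γ) j)) * h (Abelianization.of y.right) = _
        simp only [Pi.one_apply, map_one, Finset.prod_const_one, one_mul]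
        rfl⟩
  have hfin : Finite (Abelianization G) :=
    Finite.of_surjective F hFsurj
  refine ⟨hfin, ?_⟩
  have : Finite (Abelianization G →* Circle) := finite_monoidHom_circle _
  exact Finite.of_equiv _ (Abelianization.lift (G := G) (A := Circle)).symm
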